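/- Let θ ∈ (0, π/2) and Q = diag(cos θ, sin θ). With D_1 = [[sin θ, 0],[0, cos θ]] and D_2 = [[0, -sin θ],[cos θ, 0]], the conditions D_1 = p^{1/2}(Q^{-1})† U_1^T and D_2 = p^{1/2}(Q^{-1})† U_2^T hold with p = cos²θ sin²θ, U_1 = I, and U_2 = [[0,1],[-1,0]]. But for D_3 = [[cos θ, 0],[0, -sin θ]], there is no unitary U and p' > 0 with D_3 = p'^{1/2}(Q^{-1})† U^T unless cos θ = sin θ. -/

import Mathlib

open Matrix

theorem stmt_17 (θ : ℝ) (hθ : θ ∈ Set.Ioo 0 (Real.pi / 2))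
    (Q : Matrix (Fin 2) (Fin 2) ℂ)
    (hQ : Q = Matrix.diagonal ![(Real.cos θ : ℂ), (Real.sin θ : ℂ)])
    (D1 D2 D3 : Matrix (Fin 2) (Fin 2) ℂ)
    (hD1 : D1 = !![(Real.sin θ : ℂ), 0; 0, (Real.cos θ : ℂ)])
    (hD2 : D2 = !![0, -(Real.sin θ : ℂ); (Real.cos θ : ℂ), 0])
    (hD3 : D3 = !![(Real.cos θ : ℂ), 0; 0, -(Real.sin θ : ℂ)]) :
    D1 = (Real.sqrt (Real.cos θ ^ 2 * Real.sin θ ^ 2) : ℂ) •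
        ((Q⁻¹)ᴴ * (1 : Matrix (Fin 2) (Fin 2) ℂ)ᵀ) ∧
    D2 = (Real.sqrt (Real.cos θ ^ 2 * Real.sin θ ^ 2) : ℂ) •
        ((Q⁻¹)ᴴ * (!![0, 1; -1, 0] : Matrix (Fin 2) (Fin 2) ℂ)ᵀ) ∧
    (Real.cos θ ≠ Real.sin θ →
      ¬ ∃ (U : Matrix (Fin 2) (Fin 2) ℂ) (p' : ℝ),
          U ∈ Matrix.unitaryGroup (Fin 2) ℂ ∧ 0 < p' ∧
          D3 = (Real.sqrt p' : ℂ) • ((Q⁻¹)ᴴ * Uᵀ)) := by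
  obtain ⟨hθ1, hθ2⟩ := hθ
  have hc : 0 < Real.cos θ := Real.cos_pos_of_mem_Ioo
    ⟨by linarith [Real.pi_pos], hθ2⟩
  have hs : 0 < Real.sin θ := Real.sin_pos_of_pos_of_lt_pi hθ1
    (by linarith [Real.pi_pos])
  set c := Real.cos θ with hcdef
  set s := Real.sin θ with hsdef
  have hc0 : (c:ℂ) ≠ 0 := by exact_mod_cast hc.ne'
  have hs0 : (s:ℂ) ≠ 0 := by exact_mod_cast hs.ne'
  have hsqrt : Real.sqrt (c ^ 2 * s ^ 2) = c * s := by
    rw [show c ^ 2 * s ^ 2 = (c * s) ^ 2 by ring, Real.sqrt_sq (by positivity)]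
  have hQ' : Q = !![(c:ℂ), 0; 0, (s:ℂ)] := by
    rw [hQ]; ext i j; fin_cases i <;> fin_cases j <;> simp [Matrix.diagonal]
  have hQinv : Q⁻¹ = !![(c:ℂ)⁻¹, 0; 0, (s:ℂ)⁻¹] := by
    apply inv_eq_right_inv
    rw [hQ', Matrix.mul_fin_two, Matrix.one_fin_two]
    field_simp
    simp
  have hQinvH : (Q⁻¹)ᴴ = !![(c:ℂ)⁻¹, 0; 0, (s:ℂ)⁻¹] := by
    rw [hQinv]; ext i j; fin_cases i <;> fin_cases j <;>
      simp [Matrix.conjTranspose_apply]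
  refine ⟨?_, ?_, ?_⟩
  · rw [hD1, hQinvH, hsqrt, Matrix.transpose_one, Matrix.mul_one]
    ext i j; fin_cases i <;> fin_cases j <;>
      · simp [Matrix.smul_apply]
        try field_simp
        try push_cast
        try ring
  · have hT2 : (!![(0:ℂ), 1; -1, 0])ᵀ = !![0, -1; 1, 0] := by
      ext i j; fin_cases i <;> fin_cases j <;> rfl
    rw [hD2, hQinvH, hsqrt, hT2, Matrix.mul_fin_two]
    ext i j; fin_cases i <;> fin_cases j <;>
      · simp [Matrix.smul_apply]
        try field_simp
        try push_cast
        try ring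
  · rintro hne ⟨U, p', hU, hp, hEq⟩
    set q := Real.sqrt p' with hqdef
    have hq : 0 < q := Real.sqrt_pos.2 hp
    have hq0 : (q:ℂ) ≠ 0 := by exact_mod_cast hq.ne'
    have hq2 : q ^ 2 = p' := Real.sq_sqrt hp.le
    have hUT : Uᵀ = !![U 0 0, U 1 0; U 0 1, U 1 1] := by
      ext i j; fin_cases i <;> fin_cases j <;> rfl
    rw [hD3, hQinvH, hUT, Matrix.mul_fin_two] at hEq
    have e00 := congrFun (congrFun hEq 0) 0
    have e01 := congrFun (congrFun hEq 0) 1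
    have e10 := congrFun (congrFun hEq 1) 0
    have e11 := congrFun (congrFun hEq 1) 1
    simp [Matrix.smul_apply] at e00 e01 e10 e11
    have hU10 : U 1 0 = 0 := by
      rcases e01 with h | h
      · exact absurd h hq.ne'
      · rcases h with h | h
        · exact absurd h hc.ne'
        · exact h
    have hU01 : U 0 1 = 0 := by
      rcases e10 with h | h
      · exact absurd h hq.ne'
      · rcases h with h | h
        · exact absurd h hs.ne'
        · exact h
    have hU00 : U 0 0 = (c:ℂ) ^ 2 / q := by
      field_simp at e00 ⊢
      linear_combination -e00
    have hU11 : U 1 1 = -(s:ℂ) ^ 2 / q := by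
      field_simp at e11
      rw [eq_div_iff hq0]
      linear_combination -e11
    have hUU : U * star U = 1 := (Matrix.mem_unitaryGroup_iff).1 hU
    have u00 := congrFun (congrFun hUU 0) 0
    have u11 := congrFun (congrFun hUU 1) 1
    simp [Matrix.mul_apply, Fin.sum_univ_two, Matrix.conjTranspose_apply,
      hU01, hU10, hU00, hU11, Matrix.one_apply] at u00 u11
    have hc4 : c ^ 4 = q ^ 2 := by
      have : ((c:ℂ)) ^ 4 = (q:ℂ) ^ 2 := by
        field_simp at u00
        linear_combination u00
      exact_mod_cast this
    have hs4 : s ^ 4 = q ^ 2 := by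
      have : ((s:ℂ)) ^ 4 = (q:ℂ) ^ 2 := by
        field_simp at u11
        linear_combination u11
      exact_mod_cast this
    rcases lt_or_gt_of_ne hne with h | h
    · have := pow_lt_pow_left₀ h hc.le (n := 4) (by norm_num)
      linarith
    · have := pow_lt_pow_left₀ h hs.le (n := 4) (by norm_num)
      linarith
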